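/- Let B₀ be an r₀×r₀ rational matrix, B₁ an r₁×r₁ rational matrix, and s a natural number. Let X₁ (r₀×s), X₂ (r₁×s), X₃ (s×s), X₄ (s×r₀), X₅ (s×r₁), X₆ (s×s), X₇ (s×s) be arbitrary rational matrices, and let M be the square rational matrix of size r₀+r₁+s+s given in block form by M = [[B₀,0,0,X₁],[0,−B₁,0,X₂],[0,0,0,X₃],[X₄,X₅,X₆,X₇]], where the (3,3) diagonal block is the s×s zero matrix. Then the block sum (−B₀) ⊞ B₁ ⊞ M is rationally null-cobordant; equivalently, M is rationally cobordant to B₀ ⊞ (−B₁). -/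

import Mathlib

open Matrix

/-- A square matrix over a commutative ring is *null-cobordant* if its size is even,
say `n = 2 * r`, and it is congruent, via a matrix `P` with unit determinant, to a
block matrix whose upper-left `r × r` block is zero. -/
def Matrix.IsNullCobordant {R : Type*} [CommRing R] {n : ℕ}
    (A : Matrix (Fin n) (Fin n) R) : Prop :=
  ∃ r : ℕ, n = 2 * r ∧ ∃ P : Matrix (Fin n) (Fin n) R, IsUnit P.det ∧
    ∀ i j : Fin n, (i : ℕ) < r → (j : ℕ) < r → (Pᵀ * A * P) i j = 0

/-- The block sum `A ⊞ B` of square matrices: the block-diagonal matrix `[[A,0],[0,B]]`. -/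
def Matrix.blockSum {R : Type*} [CommRing R] {p q : ℕ}
    (A : Matrix (Fin p) (Fin p) R) (B : Matrix (Fin q) (Fin q) R) :
    Matrix (Fin (p + q)) (Fin (p + q)) R :=
  Matrix.reindex finSumFinEquiv finSumFinEquiv (Matrix.fromBlocks A 0 0 B)

lemma aux_key {n r : ℕ} {ι κ : Type*} [Fintype ι] [Fintype κ] [DecidableEq ι] [DecidableEq κ]
    (hn : n = 2 * r) (eι : ι ≃ Fin r) (eκ : κ ≃ Fin r)
    (A Q : Matrix (ι ⊕ κ) (ι ⊕ κ) ℚ)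
    (hQ : IsUnit Q.det)
    (hz : ∀ i j : ι, (Qᵀ * A * Q) (Sum.inl i) (Sum.inl j) = 0)
    (f : Fin n ≃ ι ⊕ κ) :
    (A.submatrix f f).IsNullCobordant := by
  have hrr : n = r + r := by omega
  let f' : Fin n ≃ ι ⊕ κ :=
    (finCongr hrr).trans (finSumFinEquiv.symm.trans (Equiv.sumCongr eι.symm eκ.symm))
  refine ⟨r, hn, Q.submatrix f f', ?_, ?_⟩
  · apply Matrix.isUnit_det_of_right_inverse (B := Q⁻¹.submatrix f' f)
    rw [Matrix.submatrix_mul_equiv, Matrix.mul_nonsing_inv _ hQ, submatrix_one_equiv]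
  · intro i j hi hj
    have hP : (Q.submatrix f f')ᵀ * A.submatrix f f * Q.submatrix f f'
        = (Qᵀ * A * Q).submatrix f' f' := by
      rw [transpose_submatrix, Matrix.submatrix_mul_equiv, Matrix.submatrix_mul_equiv]
    rw [hP]
    have hfi : ∀ k : Fin n, (k : ℕ) < r → ∃ x : ι, f' k = Sum.inl x := by
      intro k hk
      refine ⟨eι.symm ⟨(k : ℕ), hk⟩, ?_⟩
      have : finCongr hrr k = Fin.castAdd r ⟨(k : ℕ), hk⟩ := by
        ext; simp
      simp only [f', Equiv.trans_apply, Equiv.sumCongr_apply]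
      rw [this, finSumFinEquiv_symm_apply_castAdd]
      simp
    obtain ⟨x, hx⟩ := hfi i hi
    obtain ⟨y, hy⟩ := hfi j hj
    simp [Matrix.submatrix_apply, hx, hy, hz]

lemma aux_blockSum_eq {p q : ℕ} {α β : Type*} (C : Matrix α α ℚ) (M : Matrix β β ℚ)
    (c : Fin p ≃ α) (m : Fin q ≃ β) :
    (C.submatrix c c).blockSum (M.submatrix m m)
      = (fromBlocks C 0 0 M).submatrix
          (finSumFinEquiv.symm.trans (Equiv.sumCongr c m))
          (finSumFinEquiv.symm.trans (Equiv.sumCongr c m)) := by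
  ext i j
  simp only [Matrix.blockSum, reindex_apply, submatrix_apply, Equiv.trans_apply,
    Equiv.sumCongr_apply]
  rcases hi : finSumFinEquiv.symm i with a | a <;> rcases hj : finSumFinEquiv.symm j with b | b <;>
    simp [hi, hj, fromBlocks]


/-- The Seifert matrix `M` of the sphere knot obtained by gluing two disk knots along
their common boundary, in block form `[[B₀,0,0,X₁],[0,−B₁,0,X₂],[0,0,0,X₃],[X₄,X₅,X₆,X₇]]`
(blocks of sizes `r₀ + r₁ + s + s`), is rationally cobordant to `B₀ ⊞ (−B₁)`: the block sum
`(−B₀) ⊞ B₁ ⊞ M` is rationally null-cobordant. -/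
theorem combo_matrix_cobordant (r0 r1 s : ℕ)
    (B0 : Matrix (Fin r0) (Fin r0) ℚ) (B1 : Matrix (Fin r1) (Fin r1) ℚ)
    (X1 : Matrix (Fin r0) (Fin s) ℚ) (X2 : Matrix (Fin r1) (Fin s) ℚ)
    (X3 X6 X7 : Matrix (Fin s) (Fin s) ℚ)
    (X4 : Matrix (Fin s) (Fin r0) ℚ) (X5 : Matrix (Fin s) (Fin r1) ℚ) :
    (((-B0).blockSum B1).blockSum
      (Matrix.reindex ((Equiv.sumCongr finSumFinEquiv finSumFinEquiv).trans finSumFinEquiv)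
        ((Equiv.sumCongr finSumFinEquiv finSumFinEquiv).trans finSumFinEquiv)
        (Matrix.fromBlocks
          (Matrix.fromBlocks B0 0 0 (-B1))
          (Matrix.fromBlocks 0 X1 0 X2)
          (Matrix.fromBlocks 0 0 X4 X5)
          (Matrix.fromBlocks 0 X3 X6 X7)))).IsNullCobordant := by
  set F : Matrix (Fin r0 ⊕ Fin r1) (Fin r0 ⊕ Fin r1) ℚ := fromBlocks (-B0) 0 0 B1 with hF
  set Mblk : Matrix ((Fin r0 ⊕ Fin r1) ⊕ (Fin s ⊕ Fin s))
      ((Fin r0 ⊕ Fin r1) ⊕ (Fin s ⊕ Fin s)) ℚ :=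
    fromBlocks (fromBlocks B0 0 0 (-B1)) (fromBlocks 0 X1 0 X2)
      (fromBlocks 0 0 X4 X5) (fromBlocks 0 X3 X6 X7) with hMblk
  set h : ((Fin r0 ⊕ Fin r1) ⊕ (Fin s ⊕ Fin s)) ≃ Fin (r0 + r1 + (s + s)) :=
    (Equiv.sumCongr finSumFinEquiv finSumFinEquiv).trans finSumFinEquiv with hh
  set u : Fin (r0 + r1 + (r0 + r1 + (s + s)))
      ≃ ((Fin r0 ⊕ Fin r1) ⊕ ((Fin r0 ⊕ Fin r1) ⊕ (Fin s ⊕ Fin s))) :=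
    finSumFinEquiv.symm.trans (Equiv.sumCongr finSumFinEquiv.symm h.symm) with hu
  set g : ((Fin r0 ⊕ Fin r1) ⊕ ((Fin r0 ⊕ Fin r1) ⊕ (Fin s ⊕ Fin s)))
      ≃ (((Fin r0 ⊕ Fin r1) ⊕ Fin s) ⊕ ((Fin r0 ⊕ Fin r1) ⊕ Fin s)) :=
    (Equiv.sumAssoc _ _ _).symm.trans (Equiv.sumSumSumComm _ _ _ _) with hg
  set AJ : Matrix (((Fin r0 ⊕ Fin r1) ⊕ Fin s) ⊕ ((Fin r0 ⊕ Fin r1) ⊕ Fin s))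
      (((Fin r0 ⊕ Fin r1) ⊕ Fin s) ⊕ ((Fin r0 ⊕ Fin r1) ⊕ Fin s)) ℚ :=
    fromBlocks (fromBlocks F 0 0 0) (fromBlocks 0 0 0 X3) (fromBlocks 0 0 0 X6)
      (fromBlocks (-F) (fromRows X1 X2) (fromCols X4 X5) X7) with hAJ
  have step1 : ((-B0).blockSum B1).blockSum (Matrix.reindex h h Mblk)
      = (fromBlocks F 0 0 Mblk).submatrix u u := by
    have hC : (-B0).blockSum B1
        = F.submatrix (finSumFinEquiv.symm : Fin (r0 + r1) ≃ (Fin r0 ⊕ Fin r1))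
            (finSumFinEquiv.symm : Fin (r0 + r1) ≃ (Fin r0 ⊕ Fin r1)) := by
      rw [Matrix.blockSum, reindex_apply, hF]
    have hM : Matrix.reindex h h Mblk = Mblk.submatrix h.symm h.symm := by
      rw [reindex_apply]
    rw [hC, hM, aux_blockSum_eq]
  have g1 : ∀ a : Fin r0 ⊕ Fin r1, g (Sum.inl a) = Sum.inl (Sum.inl a) := fun _ => rfl
  have g2 : ∀ b : Fin r0 ⊕ Fin r1, g (Sum.inr (Sum.inl b)) = Sum.inr (Sum.inl b) :=
    fun _ => rfl
  have g3 : ∀ k : Fin s, g (Sum.inr (Sum.inr (Sum.inl k))) = Sum.inl (Sum.inr k) :=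
    fun _ => rfl
  have g4 : ∀ k : Fin s, g (Sum.inr (Sum.inr (Sum.inr k))) = Sum.inr (Sum.inr k) :=
    fun _ => rfl
  have step2 : fromBlocks F 0 0 Mblk = AJ.submatrix g g := by
    ext x y
    rcases x with (a | a) | ((b | b) | (k | k)) <;>
      rcases y with (a' | a') | ((b' | b') | (k' | k')) <;>
      simp only [submatrix_apply, g1, g2, g3, g4, hAJ, hMblk, hF,
        fromBlocks_apply₁₁, fromBlocks_apply₁₂, fromBlocks_apply₂₁, fromBlocks_apply₂₂,
        Matrix.fromRows_apply_inl, Matrix.fromRows_apply_inr,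
        Matrix.fromCols_apply_inl, Matrix.fromCols_apply_inr,
        Matrix.neg_apply, Matrix.zero_apply, neg_neg, neg_zero]
  rw [step1, step2]
  have hsub : (AJ.submatrix g g).submatrix u u = AJ.submatrix (u.trans g) (u.trans g) := by
    rw [Matrix.submatrix_submatrix]; rfl
  rw [hsub]
  set T : Matrix ((Fin r0 ⊕ Fin r1) ⊕ Fin s) ((Fin r0 ⊕ Fin r1) ⊕ Fin s) ℚ :=
    fromBlocks 1 0 0 0 with hT
  set Q : Matrix (((Fin r0 ⊕ Fin r1) ⊕ Fin s) ⊕ ((Fin r0 ⊕ Fin r1) ⊕ Fin s))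
      (((Fin r0 ⊕ Fin r1) ⊕ Fin s) ⊕ ((Fin r0 ⊕ Fin r1) ⊕ Fin s)) ℚ :=
    fromBlocks 1 0 T 1 with hQdef
  have hQ : IsUnit Q.det := by
    rw [hQdef, Matrix.det_fromBlocks_zero₁₂]
    simp
  have h11 : (Qᵀ * AJ * Q).toBlocks₁₁ = 0 := by
    rw [hQdef, hAJ, fromBlocks_transpose]
    simp only [fromBlocks_multiply, toBlocks_fromBlocks₁₁, transpose_zero, transpose_one,
      Matrix.one_mul, Matrix.mul_one, Matrix.zero_mul, Matrix.mul_zero, add_zero, zero_add,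
      hT, fromBlocks_transpose, fromBlocks_add]
    simp [fromBlocks_multiply, ← fromBlocks_add]
  have hz : ∀ i j : ((Fin r0 ⊕ Fin r1) ⊕ Fin s),
      (Qᵀ * AJ * Q) (Sum.inl i) (Sum.inl j) = 0 := by
    intro i j
    have := congrFun (congrFun h11 i) j
    simpa [Matrix.toBlocks₁₁] using this
  exact aux_key (by omega)
    ((Equiv.sumCongr finSumFinEquiv (Equiv.refl (Fin s))).trans finSumFinEquiv)
    ((Equiv.sumCongr finSumFinEquiv (Equiv.refl (Fin s))).trans finSumFinEquiv)
    AJ Q hQ hz (u.trans g)
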